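/- arXiv:2605.00210 — 2 statements merged into one kernel-verified Lean document; each statement's English description precedes it below -/
import Mathlib

section
/- Let λ ∈ ℝ with |λ| ≥ 1, let d ≥ 1 and let A = J(λ,d) be the Jordan miniblock. Let N̄ ≥ 1, let L be an N̄ × N̄ real matrix that is symmetric and positive definite, let n : Fin N̄ → ℕ satisfy 1 ≤ n i ≤ d for all i, let S be the associated block-diagonal selection matrix, and let k ∈ ℝ. Then the matrix M := S · ((I_{N̄} − k·L) ⊗ A) · Sᵀ is Schur stable if and only if the matrix λ·(I_{N̄} − k·L) is Schur stable. -/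
open Matrix Filter
open scoped Kronecker

/-- The `d × d` Jordan miniblock `J(λ,d)`: `λ` on the diagonal, `1` on the
superdiagonal, `0` elsewhere. -/
def jordanBlock (lam : ℝ) (d : ℕ) : Matrix (Fin d) (Fin d) ℝ :=
  Matrix.of fun i j => if i = j then lam else if (i : ℕ) + 1 = (j : ℕ) then 1 else 0

/-- The block-diagonal selection matrix `S = diag{S_1,…,S_N̄}` where
`S_i = [I_{n i}  0]` has size `n i × d`. -/
def selMatrix (d N : ℕ) (n : Fin N → ℕ) :
    Matrix (Σ i : Fin N, Fin (n i)) (Fin N × Fin d) ℝ :=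
  Matrix.of fun p q => if p.1 = q.1 ∧ (p.2 : ℕ) = (q.2 : ℕ) then 1 else 0

/-- A square real matrix is Schur stable if all of its complex eigenvalues have
modulus strictly less than one. -/
def SchurStable {m : Type} [Fintype m] [DecidableEq m] (M : Matrix m m ℝ) : Prop :=
  ∀ μ ∈ spectrum ℂ (M.map Complex.ofReal), ‖μ‖ < 1

lemma mem_spectrum_iff_eig {m : Type} [Fintype m] [DecidableEq m] (M : Matrix m m ℂ) (μ : ℂ) :
    μ ∈ spectrum ℂ M ↔ ∃ v : m → ℂ, v ≠ 0 ∧ M *ᵥ v = μ • v := by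
  rw [← AlgEquiv.spectrum_eq (Matrix.toLinAlgEquiv' (n := m) (R := ℂ)) M,
    ← Module.End.hasEigenvalue_iff_mem_spectrum]
  constructor
  · intro h
    obtain ⟨v, hv, hv0⟩ := h.exists_hasEigenvector
    exact ⟨v, hv0, by simpa [Matrix.toLinAlgEquiv'_apply] using
      (Module.End.mem_eigenspace_iff.mp hv)⟩
  · rintro ⟨v, hv0, hv⟩
    exact Module.End.hasEigenvalue_of_hasEigenvector
      ⟨Module.End.mem_eigenspace_iff.mpr (by simpa [Matrix.toLinAlgEquiv'_apply] using hv), hv0⟩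

lemma herm_quad_lt {m : Type} [Fintype m] [DecidableEq m] (H : Matrix m m ℂ)
    (hH : H.IsHermitian) (hs : ∀ μ ∈ spectrum ℂ H, ‖μ‖ < 1)
    (w : m → ℂ) (hw : w ≠ 0) :
    ‖star w ⬝ᵥ H *ᵥ w‖ < ‖star w ⬝ᵥ w‖ := by
  classical
  set U : Matrix m m ℂ := (hH.eigenvectorUnitary : Matrix m m ℂ) with hU
  have hUU : U * star U = 1 := (Matrix.mem_unitaryGroup_iff).mp hH.eigenvectorUnitary.2
  set c : m → ℂ := star U *ᵥ w with hc
  have hcne : c ≠ 0 := by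
    intro h
    apply hw
    have : U *ᵥ c = w := by
      rw [hc, mulVec_mulVec, hUU, one_mulVec]
    rw [← this, h, mulVec_zero]
  have hstarc : star c = star w ᵥ* U := by
    rw [hc, star_mulVec, star_eq_conjTranspose, conjTranspose_conjTranspose]
  have key1 : star w ⬝ᵥ H *ᵥ w
      = ∑ i, (hH.eigenvalues i : ℂ) * Complex.normSq (c i) := by
    conv_lhs => rw [hH.spectral_theorem, Unitary.conjStarAlgAut_apply, ← hU]
    rw [← mulVec_mulVec, ← mulVec_mulVec, dotProduct_mulVec, ← hstarc, ← hc]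
    simp only [dotProduct, mulVec_diagonal, Function.comp_apply]
    refine Finset.sum_congr rfl fun i _ => ?_
    have h : (starRingEnd ℂ) (c i) * c i = (Complex.normSq (c i) : ℂ) := by
      rw [mul_comm, Complex.mul_conj]
    rw [Pi.star_apply, RCLike.star_def,
      mul_comm (RCLike.ofReal (K := ℂ) (hH.eigenvalues i)) (c i), ← mul_assoc, h, mul_comm]
    norm_cast
    simp [RCLike.ofReal_mul]
  have key2 : star w ⬝ᵥ w = ∑ i, (Complex.normSq (c i) : ℂ) := by
    have : star c ⬝ᵥ c = star w ⬝ᵥ w := by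
      rw [hstarc, hc, ← dotProduct_mulVec, mulVec_mulVec, hUU, one_mulVec]
    rw [← this]
    simp only [dotProduct, Pi.star_apply, RCLike.star_def]
    exact Finset.sum_congr rfl fun i _ => by rw [mul_comm, Complex.mul_conj]
  rw [key1, key2]
  have habs2 : ‖∑ i, (Complex.normSq (c i) : ℂ)‖ = ∑ i, Complex.normSq (c i) := by
    have h : (∑ i, (Complex.normSq (c i) : ℂ)) = ((∑ i, Complex.normSq (c i) : ℝ) : ℂ) := by
      push_cast; ring
    rw [h, Complex.norm_real, Real.norm_eq_abs,
      abs_of_nonneg (Finset.sum_nonneg fun i _ => Complex.normSq_nonneg _)]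
  have heig : ∀ i, |hH.eigenvalues i| < 1 := by
    intro i
    have h1 : hH.eigenvalues i ∈ spectrum ℝ H := hH.eigenvalues_mem_spectrum_real i
    have h2 : ((hH.eigenvalues i : ℝ) : ℂ) ∈ spectrum ℂ H := spectrum.algebraMap_mem ℂ h1
    simpa using hs _ h2
  calc ‖∑ i, (hH.eigenvalues i : ℂ) * (Complex.normSq (c i) : ℂ)‖
      ≤ ∑ i, ‖(hH.eigenvalues i : ℂ) * (Complex.normSq (c i) : ℂ)‖ :=
        norm_sum_le _ _
    _ < ∑ i, Complex.normSq (c i) := by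
        obtain ⟨i0, hi0⟩ : ∃ i, c i ≠ 0 := Function.ne_iff.mp hcne
        refine Finset.sum_lt_sum (fun i _ => ?_) ⟨i0, Finset.mem_univ i0, ?_⟩
        · rw [norm_mul, Complex.norm_real, Complex.norm_real, Real.norm_eq_abs, Real.norm_eq_abs,
            abs_of_nonneg (Complex.normSq_nonneg _)]
          exact mul_le_of_le_one_left (Complex.normSq_nonneg _) (heig i).le
        · rw [norm_mul, Complex.norm_real, Complex.norm_real, Real.norm_eq_abs, Real.norm_eq_abs,
            abs_of_nonneg (Complex.normSq_nonneg _)]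
          have : 0 < Complex.normSq (c i0) := Complex.normSq_pos.mpr hi0
          calc |hH.eigenvalues i0| * Complex.normSq (c i0)
              < 1 * Complex.normSq (c i0) := mul_lt_mul_of_pos_right (heig i0) this
            _ = Complex.normSq (c i0) := one_mul _
    _ = ‖∑ i, (Complex.normSq (c i) : ℂ)‖ := habs2.symm

lemma sel_conj_apply (d N : ℕ) (n : Fin N → ℕ) (hnd : ∀ i, n i ≤ d)
    (X : Matrix (Fin N × Fin d) (Fin N × Fin d) ℝ) (p q : Σ i : Fin N, Fin (n i)) :
    (selMatrix d N n * X * (selMatrix d N n)ᵀ) p q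
      = X (p.1, Fin.castLE (hnd p.1) p.2) (q.1, Fin.castLE (hnd q.1) q.2) := by
  have hsel : ∀ (r : Σ i : Fin N, Fin (n i)) (u : Fin N × Fin d),
      selMatrix d N n r u = if u = (r.1, Fin.castLE (hnd r.1) r.2) then 1 else 0 := by
    intro r u
    simp only [selMatrix, Matrix.of_apply]
    refine if_congr ?_ rfl rfl
    rw [Prod.ext_iff]
    simp [Fin.ext_iff, eq_comm, and_comm]
  rw [Matrix.mul_apply]
  simp only [Matrix.transpose_apply, hsel, Matrix.mul_apply, mul_ite, mul_one, mul_zero,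
    Finset.sum_ite_eq', Finset.mem_univ, if_true, ite_mul, one_mul, zero_mul]

lemma M_entry (lam : ℝ) (d N : ℕ) (n : Fin N → ℕ) (hnd : ∀ i, n i ≤ d)
    (B : Matrix (Fin N) (Fin N) ℝ) (p q : Σ i : Fin N, Fin (n i)) :
    (selMatrix d N n * (B ⊗ₖ jordanBlock lam d) * (selMatrix d N n)ᵀ) p q
      = B p.1 q.1 * (if (p.2 : ℕ) = (q.2 : ℕ) then lam
          else if (p.2 : ℕ) + 1 = (q.2 : ℕ) then 1 else 0) := by
  rw [sel_conj_apply d N n hnd]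
  simp [Matrix.kroneckerMap_apply, jordanBlock, Fin.ext_iff]

lemma sum_if_val {m : ℕ} (t : ℕ) (ht : t < m) (f : Fin m → ℂ) :
    (∑ b : Fin m, if t = (b : ℕ) then f b else 0) = f ⟨t, ht⟩ := by
  rw [Finset.sum_eq_single (⟨t, ht⟩ : Fin m)]
  · simp
  · intro b _ hb
    rw [if_neg]
    intro h
    exact hb (Fin.ext h.symm)
  · simp

lemma sum_if_val_zero {m : ℕ} (t : ℕ) (ht : ¬ t < m) (f : Fin m → ℂ) :
    (∑ b : Fin m, if t = (b : ℕ) then f b else 0) = 0 :=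
  Finset.sum_eq_zero fun b _ => if_neg (fun h => ht (h.trans_lt b.isLt))


theorem stmt5 (lam : ℝ) (hlam : 1 ≤ |lam|) (d : ℕ) (hd : 1 ≤ d)
    (N : ℕ) (hN : 1 ≤ N) (L : Matrix (Fin N) (Fin N) ℝ)
    (hsymm : L.IsSymm) (hpd : L.PosDef)
    (n : Fin N → ℕ) (hn1 : ∀ i, 1 ≤ n i) (hnd : ∀ i, n i ≤ d) (k : ℝ) :
    SchurStable (selMatrix d N n *
        (((1 : Matrix (Fin N) (Fin N) ℝ) - k • L) ⊗ₖ jordanBlock lam d) *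
        (selMatrix d N n)ᵀ) ↔
      SchurStable (lam • ((1 : Matrix (Fin N) (Fin N) ℝ) - k • L)) := by
  classical
  set B : Matrix (Fin N) (Fin N) ℝ := (1 : Matrix (Fin N) (Fin N) ℝ) - k • L with hBdef
  set M : Matrix (Σ i : Fin N, Fin (n i)) (Σ i : Fin N, Fin (n i)) ℝ :=
    selMatrix d N n * (B ⊗ₖ jordanBlock lam d) * (selMatrix d N n)ᵀ with hMdef
  set H : Matrix (Fin N) (Fin N) ℂ := (lam • B).map Complex.ofReal with hHdef
  have hBsymm : ∀ i j, B j i = B i j := by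
    intro i j
    have h1 : Bᵀ = B := by
      rw [hBdef, transpose_sub, transpose_one, transpose_smul, hsymm]
    have := congrFun (congrFun h1 i) j
    simpa [Matrix.transpose_apply] using this
  have hH : H.IsHermitian := by
    ext i j
    simp only [hHdef, conjTranspose_apply, Matrix.map_apply, Matrix.smul_apply, smul_eq_mul,
      Complex.ofReal_mul, star_mul', Complex.star_def, Complex.conj_ofReal]
    rw [hBsymm i j]
  have hHmul : ∀ (u : Fin N → ℂ) (i : Fin N),
      (H *ᵥ u) i = ∑ j, (Complex.ofReal (lam * B i j)) * u j := by
    intro u i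
    simp [hHdef, Matrix.mulVec, dotProduct, Matrix.map_apply]
  have hMmul : ∀ (v : (Σ i : Fin N, Fin (n i)) → ℂ) (p : Σ i : Fin N, Fin (n i)),
      ((M.map Complex.ofReal) *ᵥ v) p
        = ∑ j, ∑ b : Fin (n j),
            (Complex.ofReal (B p.1 j * (if (p.2 : ℕ) = (b : ℕ) then lam
              else if (p.2 : ℕ) + 1 = (b : ℕ) then 1 else 0))) * v ⟨j, b⟩ := by
    intro v p
    rw [Matrix.mulVec]
    simp only [dotProduct, Matrix.map_apply, hMdef, M_entry lam d N n hnd]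
    rw [← Finset.univ_sigma_univ, Finset.sum_sigma]
  constructor
  · -- M stable → lam • B stable
    intro hMst μ hμ
    obtain ⟨u, hu0, hu⟩ := (mem_spectrum_iff_eig H μ).mp hμ
    set v : (Σ i : Fin N, Fin (n i)) → ℂ :=
      fun p => if (p.2 : ℕ) = 0 then u p.1 else 0 with hvdef
    have hv0 : v ≠ 0 := by
      obtain ⟨i0, hi0⟩ := Function.ne_iff.mp hu0
      intro h
      apply hi0
      have := congrFun h ⟨i0, ⟨0, hn1 i0⟩⟩
      simpa [hvdef] using this
    have hveq : (M.map Complex.ofReal) *ᵥ v = μ • v := by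
      funext p
      rw [hMmul v p]
      have hinner : ∀ j, (∑ b : Fin (n j),
          (Complex.ofReal (B p.1 j * (if (p.2 : ℕ) = (b : ℕ) then lam
            else if (p.2 : ℕ) + 1 = (b : ℕ) then 1 else 0))) * v ⟨j, b⟩)
          = (Complex.ofReal (B p.1 j * (if (p.2 : ℕ) = 0 then lam else 0))) * u j := by
        intro j
        have hterm : ∀ b : Fin (n j),
            (Complex.ofReal (B p.1 j * (if (p.2 : ℕ) = (b : ℕ) then lam
              else if (p.2 : ℕ) + 1 = (b : ℕ) then 1 else 0))) * v ⟨j, b⟩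
            = if (0 : ℕ) = (b : ℕ) then
                (Complex.ofReal (B p.1 j * (if (p.2 : ℕ) = 0 then lam else 0))) * u j
              else 0 := by
          intro b
          simp only [hvdef]
          split_ifs <;> first
            | (exfalso; omega)
            | (push_cast; ring)
            | simp
        rw [Finset.sum_congr rfl fun b _ => hterm b, sum_if_val 0 (hn1 j) _]
      rw [Finset.sum_congr rfl fun j _ => hinner j]
      by_cases hp : (p.2 : ℕ) = 0
      · simp only [hp, if_true]
        have := congrFun hu p.1
        rw [hHmul u p.1] at this
        simp only [Pi.smul_apply, smul_eq_mul] at this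
        rw [Pi.smul_apply, smul_eq_mul]
        simp only [hvdef, hp, if_true]
        rw [← this]
        exact Finset.sum_congr rfl fun j _ => by rw [mul_comm lam (B p.1 j)]
      · simp [hvdef, hp]
    exact hMst μ ((mem_spectrum_iff_eig _ μ).mpr ⟨v, hv0, hveq⟩)
  · -- lam • B stable → M stable
    intro hBst μ hμ
    obtain ⟨v, hv0, hv⟩ := (mem_spectrum_iff_eig _ μ).mp hμ
    -- pick maximal grade
    have hTne : (Finset.univ.filter (fun p : Σ i : Fin N, Fin (n i) => v p ≠ 0)).Nonempty := by
      obtain ⟨p0, hp0⟩ := Function.ne_iff.mp hv0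
      exact ⟨p0, Finset.mem_filter.mpr ⟨Finset.mem_univ _, hp0⟩⟩
    obtain ⟨pm, hpmmem, hpmmax⟩ := Finset.exists_max_image _
      (fun p : Σ i : Fin N, Fin (n i) => (p.2 : ℕ)) hTne
    have hvpm : v pm ≠ 0 := (Finset.mem_filter.mp hpmmem).2
    set a : ℕ := (pm.2 : ℕ) with hadef
    have hmax : ∀ p : Σ i : Fin N, Fin (n i), a < (p.2 : ℕ) → v p = 0 := by
      intro p hp
      by_contra h
      exact absurd (hpmmax p (Finset.mem_filter.mpr ⟨Finset.mem_univ _, h⟩)) (by omega)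
    set w : Fin N → ℂ := fun j => if h : a < n j then v ⟨j, ⟨a, h⟩⟩ else 0 with hwdef
    have hw0 : w ≠ 0 := by
      intro h
      apply hvpm
      have h3 : (⟨a, pm.2.isLt⟩ : Fin (n pm.1)) = pm.2 := Fin.ext rfl
      have h4 : w pm.1 = v ⟨pm.1, ⟨a, pm.2.isLt⟩⟩ := dif_pos pm.2.isLt
      rw [h3, Sigma.eta] at h4
      rw [← h4, h, Pi.zero_apply]
    -- eigen-equation for grades
    have hkey : ∀ i : Fin N, a < n i →
        μ * w i = ∑ j, (Complex.ofReal (lam * B i j)) * w j := by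
      intro i hi
      have heq := congrFun hv ⟨i, ⟨a, hi⟩⟩
      rw [hMmul v ⟨i, ⟨a, hi⟩⟩] at heq
      simp only [Pi.smul_apply, smul_eq_mul] at heq
      have hinner : ∀ j, (∑ b : Fin (n j),
          (Complex.ofReal (B i j * (if a = (b : ℕ) then lam
            else if a + 1 = (b : ℕ) then 1 else 0))) * v ⟨j, b⟩)
          = (Complex.ofReal (lam * B i j)) * w j := by
        intro j
        have hterm : ∀ b : Fin (n j),
            (Complex.ofReal (B i j * (if a = (b : ℕ) then lam
              else if a + 1 = (b : ℕ) then 1 else 0))) * v ⟨j, b⟩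
            = if a = (b : ℕ) then (Complex.ofReal (lam * B i j)) * v ⟨j, b⟩ else 0 := by
          intro b
          by_cases h1 : a = (b : ℕ)
          · simp only [h1, if_true]
            have : ¬ ((b : ℕ) + 1 = (b : ℕ)) := by omega
            push_cast
            ring
          · by_cases h2 : a + 1 = (b : ℕ)
            · rw [if_neg h1, if_pos h2, if_neg h1, hmax ⟨j, b⟩ (by simp; omega), mul_zero]
            · simp [h1, h2]
        rw [Finset.sum_congr rfl fun b _ => hterm b]
        by_cases hj : a < n j
        · rw [sum_if_val a hj _]
          have hwj : w j = v ⟨j, ⟨a, hj⟩⟩ := dif_pos hj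
          rw [hwj]
        · rw [sum_if_val_zero a hj _]
          have hwj : w j = 0 := dif_neg hj
          rw [hwj, mul_zero]
      rw [Finset.sum_congr rfl fun j _ => hinner j] at heq
      have hwi : w i = v ⟨i, ⟨a, hi⟩⟩ := dif_pos hi
      rw [hwi]
      exact heq.symm
    -- dot product identity
    have hdot : star w ⬝ᵥ (H *ᵥ w) = μ * (star w ⬝ᵥ w) := by
      simp only [dotProduct, Pi.star_apply, RCLike.star_def, Finset.mul_sum]
      refine Finset.sum_congr rfl fun i _ => ?_
      by_cases hi : a < n i
      · rw [hHmul w i, ← hkey i hi]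
        ring
      · have : w i = 0 := dif_neg hi
        rw [this]
        simp
    have hlt := herm_quad_lt H hH hBst w hw0
    rw [hdot, norm_mul] at hlt
    have hpos : 0 < ‖star w ⬝ᵥ w‖ := by
      rw [norm_pos_iff]
      intro h
      apply hw0
      have h2 : (star w ⬝ᵥ w) = ((∑ i, Complex.normSq (w i) : ℝ) : ℂ) := by
        simp only [dotProduct, Pi.star_apply, RCLike.star_def]
        push_cast
        exact Finset.sum_congr rfl fun i _ => by rw [mul_comm, Complex.mul_conj]
      rw [h2] at h
      norm_cast at h
      funext i
      have := Finset.sum_eq_zero_iff_of_nonneg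
        (fun i _ => Complex.normSq_nonneg (w i)) |>.mp h i (Finset.mem_univ i)
      exact Complex.normSq_eq_zero.mp this
    exact (mul_lt_mul_iff_left₀ hpos).mp (by simpa using hlt)
end

section
/- Let λ ∈ ℝ with |λ| ≥ 1, let d ≥ 1 and let A = J(λ,d) be the Jordan miniblock. Let N̄ ≥ 1, let L be an N̄ × N̄ real matrix, let n : Fin N̄ → ℕ satisfy 1 ≤ n i ≤ d for all i, let S be the associated block-diagonal selection matrix, let k ∈ ℝ, and set M := S · ((I_{N̄} − k·L) ⊗ A) · Sᵀ. Then for every initial vector η(0) the sequence Mᵗ · η(0) tends to the zero vector as t → ∞ if and only if for every complex eigenvalue μ of S · (L ⊗ I_d) · Sᵀ one has |1 − k·μ| < 1/|λ|. -/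
open Matrix Filter
open scoped ENNReal NNReal
open scoped Kronecker

attribute [local instance] Matrix.linftyOpNormedRing Matrix.linftyOpNormedAlgebra

section Aux

variable {m : Type} [Fintype m] [DecidableEq m]

open Polynomial in
lemma aux_eval_charpoly {F : Type} [Field F] (X : Matrix m m F) (μ : F) :
    X.charpoly.eval μ = (algebraMap F (Matrix m m F) μ - X).det := by
  rw [Matrix.charpoly, ← Polynomial.coe_evalRingHom, RingHom.map_det]
  congr 1
  ext i j
  by_cases h : i = j <;>
    simp [h, Matrix.charmatrix_apply, Matrix.algebraMap_matrix_apply]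

open Polynomial in
lemma aux_mem_spectrum_iff {F : Type} [Field F] (X : Matrix m m F) (μ : F) :
    μ ∈ spectrum F X ↔ X.charpoly.IsRoot μ := by
  rw [spectrum.mem_iff, Matrix.isUnit_iff_isUnit_det, isUnit_iff_ne_zero, not_not,
    Polynomial.IsRoot, aux_eval_charpoly]

lemma aux_entry_nnnorm_le (X : Matrix m m ℂ) (i j : m) : ‖X i j‖₊ ≤ ‖X‖₊ := by
  rw [Matrix.linfty_opNNNorm_def]
  calc ‖X i j‖₊ ≤ ∑ j', ‖X i j'‖₊ :=
        Finset.single_le_sum (f := fun j' => ‖X i j'‖₊) (fun _ _ => zero_le) (Finset.mem_univ j)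
    _ ≤ _ := Finset.le_sup (f := fun i => ∑ j', ‖X i j'‖₊) (Finset.mem_univ i)

lemma aux_map_pow (M : Matrix m m ℝ) (t : ℕ) :
    (M ^ t).map Complex.ofReal = (M.map Complex.ofReal) ^ t := by
  induction t with
  | zero => exact Matrix.map_one _ Complex.ofReal_zero Complex.ofReal_one
  | succ t ih =>
    rw [pow_succ, pow_succ, ← ih]
    exact Matrix.map_mul (f := Complex.ofRealHom)

end Aux

section Aux2

variable {m : Type} [Fintype m] [DecidableEq m]

lemma aux_tendsto_iff [Nonempty m] (M : Matrix m m ℝ) :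
    (∀ η₀ : m → ℝ, Tendsto (fun t : ℕ => (M ^ t) *ᵥ η₀) atTop (nhds 0)) ↔
      ∀ μ ∈ spectrum ℂ (M.map Complex.ofReal), ‖μ‖ < 1 := by
  haveI : Nontrivial (Matrix m m ℂ) := inferInstance
  constructor
  · intro h μ hμ
    rw [spectrum.mem_iff, Matrix.isUnit_iff_isUnit_det, isUnit_iff_ne_zero, not_not] at hμ
    obtain ⟨v, hv, hvmul⟩ := (Matrix.exists_mulVec_eq_zero_iff).2 hμ
    have hev : (M.map Complex.ofReal) *ᵥ v = μ • v := by
      rw [sub_mulVec] at hvmul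
      have h2 : (algebraMap ℂ (Matrix m m ℂ) μ) *ᵥ v = μ • v := by
        rw [Algebra.algebraMap_eq_smul_one, smul_mulVec, one_mulVec]
      rw [h2] at hvmul
      exact (sub_eq_zero.mp hvmul).symm
    have hiter : ∀ t : ℕ, ((M.map Complex.ofReal) ^ t) *ᵥ v = μ ^ t • v := by
      intro t
      induction t with
      | zero => simp
      | succ t ih =>
        rw [pow_succ, ← Matrix.mulVec_mulVec, hev, Matrix.mulVec_smul, ih, smul_smul, pow_succ, mul_comm]
    obtain ⟨j, hj⟩ := Function.ne_iff.mp hv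
    set re : m → ℝ := fun l => (v l).re with hre
    set im : m → ℝ := fun l => (v l).im with him
    have hre0 : Tendsto (fun t : ℕ => ((M ^ t) *ᵥ re) j) atTop (nhds 0) := by
      simpa using tendsto_pi_nhds.mp (h re) j
    have him0 : Tendsto (fun t : ℕ => ((M ^ t) *ᵥ im) j) atTop (nhds 0) := by
      simpa using tendsto_pi_nhds.mp (h im) j
    have key : ∀ t : ℕ, μ ^ t * v j =
        (((M ^ t) *ᵥ re) j : ℝ) + Complex.I * (((M ^ t) *ᵥ im) j : ℝ) := by
      intro t
      have h1 : μ ^ t * v j = (((M.map Complex.ofReal) ^ t) *ᵥ v) j := by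
        rw [hiter]; simp [smul_eq_mul]
      rw [h1, ← aux_map_pow]
      simp only [Matrix.mulVec, dotProduct, Matrix.map_apply]
      push_cast
      rw [Finset.mul_sum, ← Finset.sum_add_distrib]
      apply Finset.sum_congr rfl
      intro l _
      rw [← Complex.re_add_im (v l)]
      push_cast
      ring
    have hc : Tendsto (fun t : ℕ => μ ^ t * v j) atTop (nhds 0) := by
      rw [show (0 : ℂ) = (0 : ℝ) + Complex.I * (0 : ℝ) by simp]
      simp only [key]
      exact ((Complex.continuous_ofReal.tendsto 0).comp hre0).add
        (((Complex.continuous_ofReal.tendsto 0).comp him0).const_mul _)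
    have hpowt : Tendsto (fun t : ℕ => ‖μ‖ ^ t) atTop (nhds 0) := by
      have h2 : Tendsto (fun t : ℕ => ‖μ ^ t * v j‖ * ‖v j‖⁻¹) atTop (nhds 0) := by
        simpa using ((continuous_norm.tendsto 0).comp hc).mul_const ‖v j‖⁻¹
      have heq : (fun t : ℕ => ‖μ ^ t * v j‖ * ‖v j‖⁻¹) = fun t : ℕ => ‖μ‖ ^ t := by
        funext t
        rw [norm_mul, norm_pow, mul_assoc, mul_inv_cancel₀ (norm_ne_zero_iff.mpr hj), mul_one]
      rwa [heq] at h2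
    have : |‖μ‖| < 1 := tendsto_pow_atTop_nhds_zero_iff.mp hpowt
    rw [abs_of_nonneg (norm_nonneg μ)] at this
    simpa using this
  · intro hs η₀
    have hρ : spectralRadius ℂ (M.map Complex.ofReal) < 1 := by
      have h1 := spectrum.spectralRadius_lt_of_forall_lt (a := M.map Complex.ofReal) (r := 1)
        (fun z hz => by
          have := hs z hz
          rw [← NNReal.coe_lt_coe]
          simpa using this)
      simpa using h1
    obtain ⟨r, hρr, hr1⟩ := ENNReal.lt_iff_exists_nnreal_btwn.mp hρ
    have hr1' : (r : ℝ) < 1 := by exact_mod_cast hr1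
    have hgel := spectrum.pow_nnnorm_pow_one_div_tendsto_nhds_spectralRadius
      (M.map Complex.ofReal)
    have hev := hgel.eventually_lt_const hρr
    have hbound : ∀ᶠ t : ℕ in atTop, ∀ i j : m, |(M ^ t) i j| ≤ (r : ℝ) ^ t := by
      filter_upwards [hev, eventually_ge_atTop 1] with t ht ht1 i j
      have htne : (t : ℝ) ≠ 0 := by positivity
      have h1 : (‖(M.map Complex.ofReal) ^ t‖₊ : ℝ≥0∞) < (r : ℝ≥0∞) ^ (t : ℝ) := by
        have h2 := ENNReal.rpow_lt_rpow ht (by positivity : (0 : ℝ) < (t : ℝ))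
        rwa [← ENNReal.rpow_mul, one_div, inv_mul_cancel₀ htne, ENNReal.rpow_one] at h2
      rw [ENNReal.rpow_natCast, ← ENNReal.coe_pow, ENNReal.coe_lt_coe] at h1
      have h3 : ‖((M.map Complex.ofReal) ^ t) i j‖₊ ≤ r ^ t :=
        le_of_lt (lt_of_le_of_lt (aux_entry_nnnorm_le _ i j) h1)
      have h4 : ‖((M.map Complex.ofReal) ^ t) i j‖ ≤ ((r : ℝ)) ^ t := by
        have := (NNReal.coe_le_coe.mpr h3)
        simpa [← NNReal.coe_pow] using this
      rw [← aux_map_pow] at h4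
      simpa [Matrix.map_apply, Complex.norm_real, Real.norm_eq_abs] using h4
    have hentry : ∀ i j : m, Tendsto (fun t : ℕ => (M ^ t) i j) atTop (nhds 0) := by
      intro i j
      apply squeeze_zero_norm' ?_ (tendsto_pow_atTop_nhds_zero_of_lt_one r.coe_nonneg hr1')
      filter_upwards [hbound] with t h using by simpa [Real.norm_eq_abs] using h i j
    rw [tendsto_pi_nhds]
    intro i
    have : Tendsto (fun t : ℕ => ∑ j, (M ^ t) i j * η₀ j) atTop (nhds (∑ j : m, 0)) :=
      tendsto_finset_sum Finset.univ (fun j _ => by simpa using (hentry i j).mul_const (η₀ j))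
    simpa [Matrix.mulVec, dotProduct] using this

end Aux2

section Aux3

lemma sel_apply {d N : ℕ} {n : Fin N → ℕ} (hnd : ∀ i, n i ≤ d)
    (p : Σ i : Fin N, Fin (n i)) (u : Fin N × Fin d) :
    selMatrix d N n p u =
      if (⟨p.1, Fin.castLE (hnd p.1) p.2⟩ : Fin N × Fin d) = u then 1 else 0 := by
  unfold selMatrix
  rw [Matrix.of_apply]
  refine if_congr ?_ rfl rfl
  constructor
  · rintro ⟨h1, h2⟩
    exact Prod.ext h1 (Fin.ext h2)
  · rintro rfl
    exact ⟨rfl, rfl⟩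

lemma sel_conj {d N : ℕ} {n : Fin N → ℕ} (hnd : ∀ i, n i ≤ d)
    (X : Matrix (Fin N × Fin d) (Fin N × Fin d) ℝ) (p q : Σ i : Fin N, Fin (n i)) :
    (selMatrix d N n * X * (selMatrix d N n)ᵀ) p q
      = X (p.1, Fin.castLE (hnd p.1) p.2) (q.1, Fin.castLE (hnd q.1) q.2) := by
  simp only [Matrix.mul_apply, Matrix.transpose_apply, sel_apply hnd, ite_mul, one_mul,
    zero_mul, mul_ite, mul_one, mul_zero, Finset.sum_ite_eq, Finset.mem_univ, if_true]

end Aux3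

theorem stmt12 (lam : ℝ) (hlam : 1 ≤ |lam|) (d : ℕ) (hd : 1 ≤ d)
    (N : ℕ) (hN : 1 ≤ N) (L : Matrix (Fin N) (Fin N) ℝ)
    (n : Fin N → ℕ) (hn1 : ∀ i, 1 ≤ n i) (hnd : ∀ i, n i ≤ d) (k : ℝ)
    (M : Matrix (Σ i : Fin N, Fin (n i)) (Σ i : Fin N, Fin (n i)) ℝ)
    (hM : M = selMatrix d N n *
        (((1 : Matrix (Fin N) (Fin N) ℝ) - k • L) ⊗ₖ jordanBlock lam d) *
        (selMatrix d N n)ᵀ) :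
    (∀ η₀ : (Σ i : Fin N, Fin (n i)) → ℝ,
        Filter.Tendsto (fun t : ℕ => (M ^ t) *ᵥ η₀) Filter.atTop (nhds 0)) ↔
      ∀ μ ∈ spectrum ℂ ((selMatrix d N n *
          (L ⊗ₖ (1 : Matrix (Fin d) (Fin d) ℝ)) * (selMatrix d N n)ᵀ).map Complex.ofReal),
        ‖1 - (k : ℂ) * μ‖ < 1 / |lam| := by
  classical
  haveI hne : Nonempty (Σ i : Fin N, Fin (n i)) := ⟨⟨⟨0, hN⟩, ⟨0, hn1 _⟩⟩⟩
  set C : Matrix (Σ i : Fin N, Fin (n i)) (Σ i : Fin N, Fin (n i)) ℝ :=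
    selMatrix d N n * (L ⊗ₖ (1 : Matrix (Fin d) (Fin d) ℝ)) * (selMatrix d N n)ᵀ with hC
  set D : Matrix (Σ i : Fin N, Fin (n i)) (Σ i : Fin N, Fin (n i)) ℝ :=
    lam • ((1 : Matrix (Σ i : Fin N, Fin (n i)) (Σ i : Fin N, Fin (n i)) ℝ) - k • C) with hD
  have hlpos : (0 : ℝ) < |lam| := lt_of_lt_of_le one_pos hlam
  -- entry formulas
  have hMe : ∀ p q : Σ i : Fin N, Fin (n i),
      M p q = ((1 : Matrix (Fin N) (Fin N) ℝ) - k • L) p.1 q.1 *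
        (if (p.2 : ℕ) = (q.2 : ℕ) then lam else
          if (p.2 : ℕ) + 1 = (q.2 : ℕ) then 1 else 0) := by
    intro p q
    rw [hM, sel_conj hnd, Matrix.kroneckerMap_apply]
    congr 1
    unfold jordanBlock
    rw [Matrix.of_apply]
    simp [Fin.ext_iff]
  have hCe : ∀ p q : Σ i : Fin N, Fin (n i),
      C p q = L p.1 q.1 * (if (p.2 : ℕ) = (q.2 : ℕ) then 1 else 0) := by
    intro p q
    rw [hC, sel_conj hnd, Matrix.kroneckerMap_apply]
    congr 1
    simp [Matrix.one_apply, Fin.ext_iff]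
  have hDe : ∀ p q : Σ i : Fin N, Fin (n i),
      D p q = (if (p.2 : ℕ) = (q.2 : ℕ) then
        lam * (((1 : Matrix (Fin N) (Fin N) ℝ) - k • L) p.1 q.1) else 0) := by
    rintro ⟨p1, p2⟩ ⟨q1, q2⟩
    rw [hD]
    simp only [Matrix.smul_apply, Matrix.sub_apply, Matrix.smul_apply, hCe, smul_eq_mul]
    by_cases h1 : p1 = q1
    · subst h1
      by_cases hv : (p2 : ℕ) = (q2 : ℕ)
      · have : p2 = q2 := Fin.ext hv
        subst this
        simp [Matrix.one_apply, Matrix.sub_apply]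
      · have hnep : (⟨p1, p2⟩ : Σ i : Fin N, Fin (n i)) ≠ ⟨p1, q2⟩ := by
          intro h
          exact hv (congrArg (fun x : Σ i : Fin N, Fin (n i) => ((x.2 : ℕ))) h)
        simp [Matrix.one_apply, hnep, hv]
    · have hnep : (⟨p1, p2⟩ : Σ i : Fin N, Fin (n i)) ≠ ⟨q1, q2⟩ := by
        intro h
        exact h1 (congrArg (fun x : Σ i : Fin N, Fin (n i) => x.1) h)
      by_cases hv : (p2 : ℕ) = (q2 : ℕ) <;>
        simp [Matrix.one_apply, hnep, hv, h1] <;> ring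
  -- block triangular structure
  set b : (Σ i : Fin N, Fin (n i)) → ℕ := fun p => (p.2 : ℕ) with hb
  have hMT : (M.map Complex.ofReal).BlockTriangular b := by
    intro p q hlt
    simp only [Matrix.map_apply, hMe]
    have h1 : ¬((p.2 : ℕ) = (q.2 : ℕ)) := by simp only [hb] at hlt; omega
    have h2 : ¬((p.2 : ℕ) + 1 = (q.2 : ℕ)) := by simp only [hb] at hlt; omega
    simp [h1, h2]
  have hDT : (D.map Complex.ofReal).BlockTriangular b := by
    intro p q hlt
    simp only [Matrix.map_apply, hDe]
    have h1 : ¬((p.2 : ℕ) = (q.2 : ℕ)) := by simp only [hb] at hlt; omega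
    simp [h1]
  have hblocks : ∀ a : ℕ, (M.map Complex.ofReal).toSquareBlock b a
      = (D.map Complex.ofReal).toSquareBlock b a := by
    intro a
    ext ⟨p, hp⟩ ⟨q, hq⟩
    simp only [Matrix.toSquareBlock_def, Matrix.of_apply, Matrix.map_apply, hMe, hDe]
    have hv : (p.2 : ℕ) = (q.2 : ℕ) := by
      simp only [hb] at hp hq; omega
    simp [hv, mul_comm]
  have hchar : (M.map Complex.ofReal).charpoly = (D.map Complex.ofReal).charpoly := by
    rw [hMT.charpoly, hDT.charpoly]
    exact Finset.prod_congr rfl (fun a _ => by rw [hblocks a])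
  have hspecMD : spectrum ℂ (M.map Complex.ofReal) = spectrum ℂ (D.map Complex.ofReal) := by
    ext x
    rw [aux_mem_spectrum_iff, aux_mem_spectrum_iff, hchar]
  -- spectrum of D
  have hDmap : D.map Complex.ofReal = (lam : ℂ) •
      ((1 : Matrix (Σ i : Fin N, Fin (n i)) (Σ i : Fin N, Fin (n i)) ℂ)
        - (k : ℂ) • (C.map Complex.ofReal)) := by
    ext p q
    simp only [hD, Matrix.map_apply, Matrix.smul_apply, Matrix.sub_apply, smul_eq_mul,
      Matrix.one_apply]
    by_cases h : p = q <;> simp [h] <;> push_cast <;> ring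
  haveI : Nontrivial
      (Matrix (Σ i : Fin N, Fin (n i)) (Σ i : Fin N, Fin (n i)) ℂ) := inferInstance
  have hCne : (spectrum ℂ (C.map Complex.ofReal)).Nonempty := spectrum.nonempty _
  have h1ne : (spectrum ℂ
      ((1 : Matrix (Σ i : Fin N, Fin (n i)) (Σ i : Fin N, Fin (n i)) ℂ)
        - (k : ℂ) • (C.map Complex.ofReal))).Nonempty := spectrum.nonempty _
  have hspecD : spectrum ℂ (D.map Complex.ofReal)
      = (fun μ : ℂ => (lam : ℂ) * (1 - (k : ℂ) * μ)) '' spectrum ℂ (C.map Complex.ofReal) := by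
    rw [hDmap, spectrum.smul_eq_smul _ _ h1ne]
    have h1 : (1 : Matrix (Σ i : Fin N, Fin (n i)) (Σ i : Fin N, Fin (n i)) ℂ)
        - (k : ℂ) • (C.map Complex.ofReal)
        = algebraMap ℂ (Matrix (Σ i : Fin N, Fin (n i)) (Σ i : Fin N, Fin (n i)) ℂ) 1
          - (k : ℂ) • (C.map Complex.ofReal) := by simp
    rw [h1, ← spectrum.singleton_sub_eq, spectrum.smul_eq_smul _ _ hCne]
    ext x
    constructor
    · rintro ⟨y, hy, rfl⟩
      rw [Set.mem_sub] at hy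
      obtain ⟨a, ha, bb, hbb, rfl⟩ := hy
      rw [Set.mem_singleton_iff] at ha
      subst ha
      obtain ⟨μ, hμ, rfl⟩ := hbb
      exact ⟨μ, hμ, by simp [smul_eq_mul]⟩
    · rintro ⟨μ, hμ, rfl⟩
      refine ⟨1 - (k : ℂ) * μ, Set.mem_sub.mpr ⟨1, Set.mem_singleton _,
        (k : ℂ) * μ, ⟨μ, hμ, rfl⟩, by ring⟩, by simp [smul_eq_mul]⟩
  -- final assembly
  rw [aux_tendsto_iff M]
  constructor
  · intro h μ hμ
    have h2 := h _ (by rw [hspecMD, hspecD]; exact ⟨μ, hμ, rfl⟩)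
    simp only [] at h2
    rw [norm_mul, Complex.norm_real, Real.norm_eq_abs] at h2
    rw [lt_div_iff₀ hlpos]
    linarith [h2, mul_comm (|lam|) (‖1 - (k : ℂ) * μ‖)]
  · intro h μ' hμ'
    rw [hspecMD, hspecD] at hμ'
    obtain ⟨μ, hμ, rfl⟩ := hμ'
    have h2 := h μ hμ
    rw [lt_div_iff₀ hlpos] at h2
    rw [norm_mul, Complex.norm_real, Real.norm_eq_abs]
    linarith [h2, mul_comm (|lam|) (‖1 - (k : ℂ) * μ‖)]
end
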